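/- Let $M'$ be a matroid on ground set $E'$ and $F$ a flat of $M'$. Define $M = M' +_F a$ on $E = E' \cup \{a\}$ (where $a \notin E'$) by declaring its bases to be $\mathcal{B}(M') \cup \{(\lambda \setminus \{b\}) \cup \{a\} : \lambda \in \mathcal{B}(M'),\ b \in \lambda \cap F\}$. Then this collection satisfies the basis exchange axiom, so $M$ is a matroid (the principal extension of $M'$ by $a$ into $F$), and $\mathrm{rank}(M) = \mathrm{rank}(M')$. -/

import Mathlib

open Set Matroid

/-- The bases of the principal extension `M' +_F a` of `M'` by `a` into the flat `F`:
the bases of `M'`, together with the sets `(λ \ {b}) ∪ {a}` for `λ` a base of `M'` and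
`b ∈ λ ∩ F`. -/
def PrincipalExtBase {α : Type*} (M' : Matroid α) (F : Set α) (a : α)
    (B : Set α) : Prop :=
  M'.IsBase B ∨ ∃ B₀ b, M'.IsBase B₀ ∧ b ∈ B₀ ∩ F ∧ B = insert a (B₀ \ {b})

section Aux

variable {α : Type*} {M' : Matroid α} {F : Set α} {a : α} {I B : Set α}
lemma peb_subset_ground (ha : a ∉ M'.E) (hB : PrincipalExtBase M' F a B) :
    B ⊆ insert a M'.E := by
  rcases hB with hB | ⟨β, b, hβ, _, rfl⟩
  · exact hB.subset_ground.trans (subset_insert _ _)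
  · exact insert_subset_insert ((diff_subset).trans hβ.subset_ground)

lemma peb_indep_iff (ha : a ∉ M'.E) (hF : M'.IsFlat F) :
    (∃ B, PrincipalExtBase M' F a B ∧ I ⊆ B) ↔
      ((a ∉ I ∧ M'.Indep I) ∨
        (a ∈ I ∧ M'.Indep (I \ {a}) ∧ ∃ f ∈ F, f ∉ M'.closure (I \ {a}))) := by
  constructor
  · rintro ⟨B, hB | ⟨β, b, hβ, ⟨hbβ, hbF⟩, rfl⟩, hIB⟩
    · exact Or.inl ⟨fun h => ha (hB.subset_ground (hIB h)), hB.indep.subset hIB⟩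
    · have haβ : a ∉ β := fun h => ha (hβ.subset_ground h)
      have hIa : I \ {a} ⊆ β \ {b} := by
        intro t ⟨htI, hta⟩
        rcases hIB htI with rfl | h
        · exact absurd rfl hta
        · exact h
      have hind : M'.Indep (I \ {a}) := (hβ.indep.subset diff_subset).subset hIa
      by_cases haI : a ∈ I
      · refine Or.inr ⟨haI, hind, b, hbF, fun hb => ?_⟩
        exact hβ.indep.notMem_closure_diff_of_mem hbβ (M'.closure_subset_closure hIa hb)
      · refine Or.inl ⟨haI, ?_⟩
        have : I ⊆ β \ {b} := by
          intro t ht; rcases hIB ht with rfl | h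
          · exact absurd ht haI
          · exact h
        exact hβ.indep.subset (this.trans diff_subset)
  · rintro (⟨haI, hI⟩ | ⟨haI, hI, f, hfF, hf⟩)
    · obtain ⟨β, hβ, hIβ⟩ := hI.exists_isBase_superset
      exact ⟨β, Or.inl hβ, hIβ⟩
    · have hfE : f ∈ M'.E := hF.subset_ground hfF
      have hfI : f ∉ I \ {a} := fun h => hf (M'.subset_closure _ hI.subset_ground h)
      have hins : M'.Indep (insert f (I \ {a})) := by
        rw [hI.insert_indep_iff_of_notMem hfI]; exact ⟨hfE, hf⟩
      obtain ⟨β, hβ, hsub⟩ := hins.exists_isBase_superset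
      refine ⟨insert a (β \ {f}), Or.inr ⟨β, f, hβ, ⟨hsub (mem_insert _ _), hfF⟩, rfl⟩, ?_⟩
      intro t ht
      by_cases hta : t = a
      · exact hta ▸ mem_insert _ _
      · exact mem_insert_of_mem _ ⟨hsub (mem_insert_of_mem _ ⟨ht, hta⟩),
          fun h => hfI (h ▸ ⟨ht, hta⟩)⟩

lemma insert_swap1 {s : Set α} {a b x y : α} (hxa : x ≠ a) (hyb : y ≠ b) :
    insert y ((insert a (s \ {b})) \ {x}) = insert a ((insert y (s \ {x})) \ {b}) := by
  ext t
  simp only [mem_insert_iff, mem_diff, mem_singleton_iff]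
  constructor
  · rintro (rfl | ⟨rfl | ⟨hts, htb⟩, htx⟩)
    · exact Or.inr ⟨Or.inl rfl, hyb⟩
    · exact Or.inl rfl
    · exact Or.inr ⟨Or.inr ⟨hts, htx⟩, htb⟩
  · rintro (rfl | ⟨rfl | ⟨hts, htx⟩, htb⟩)
    · exact Or.inr ⟨Or.inl rfl, fun h => hxa h.symm⟩
    · exact Or.inl rfl
    · exact Or.inr ⟨Or.inr ⟨hts, htb⟩, htx⟩

lemma insert_swap2 {s : Set α} {a b x : α} (hbs : b ∈ s) (hxa : x ≠ a) (hbx : b ≠ x) :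
    insert b ((insert a (s \ {b})) \ {x}) = insert a (s \ {x}) := by
  ext t
  simp only [mem_insert_iff, mem_diff, mem_singleton_iff]
  constructor
  · rintro (rfl | ⟨rfl | ⟨hts, _⟩, htx⟩)
    · exact Or.inr ⟨hbs, hbx⟩
    · exact Or.inl rfl
    · exact Or.inr ⟨hts, htx⟩
  · rintro (rfl | ⟨hts, htx⟩)
    · exact Or.inr ⟨Or.inl rfl, fun h => hxa h.symm⟩
    · by_cases htb : t = b
      · exact Or.inl htb
      · exact Or.inr ⟨Or.inr ⟨hts, htb⟩, htx⟩

lemma peb_exchange (ha : a ∉ M'.E) (hF : M'.IsFlat F) :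
    Matroid.ExchangeProperty (PrincipalExtBase M' F a) := by
  have hnm : ∀ {β : Set α}, M'.IsBase β → a ∉ β := fun hβ h => ha (hβ.subset_ground h)
  have hni : ∀ {y : α} {s : Set α}, y ∈ M'.E → y ∉ s → y ∉ insert a s :=
    fun hyE hys h => h.elim (fun he => ha (he ▸ hyE)) hys
  rintro B₁ B₂ h₁ h₂ x hx
  rcases h₁ with hβ₁ | ⟨β₁, b₁, hβ₁, ⟨hb₁, hb₁F⟩, rfl⟩
  · -- B₁ is a base of M'
    rcases h₂ with hβ₂ | ⟨β₂, b₂, hβ₂, ⟨hb₂, hb₂F⟩, rfl⟩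
    · -- Case 1
      obtain ⟨y, hy, hbase⟩ := hβ₁.exchange hβ₂ hx
      exact ⟨y, hy, Or.inl hbase⟩
    · -- Case 2
      have haB₁ : a ∉ B₁ := hnm hβ₁
      by_cases hxβ₂ : x ∈ β₂
      · have hxb₂ : x = b₂ := by
          by_contra h
          exact hx.2 (mem_insert_of_mem _ ⟨hxβ₂, h⟩)
        refine ⟨a, ⟨mem_insert _ _, haB₁⟩,
          Or.inr ⟨B₁, x, hβ₁, ⟨hx.1, hxb₂ ▸ hb₂F⟩, rfl⟩⟩
      · obtain ⟨y, ⟨hyβ₂, hyB₁⟩, hbase⟩ := hβ₁.exchange hβ₂ ⟨hx.1, hxβ₂⟩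
        by_cases hyb₂ : y = b₂
        · refine ⟨a, ⟨mem_insert _ _, haB₁⟩,
            Or.inr ⟨insert y (B₁ \ {x}), b₂, hbase, ⟨hyb₂ ▸ mem_insert _ _, hb₂F⟩, ?_⟩⟩
          rw [hyb₂, insert_diff_self_of_notMem (fun h => hyB₁ (hyb₂ ▸ h.1))]
        · exact ⟨y, ⟨mem_insert_of_mem _ ⟨hyβ₂, hyb₂⟩, hyB₁⟩, Or.inl hbase⟩
  · -- B₁ = insert a (β₁ \ {b₁})
    have haβ₁ : a ∉ β₁ := hnm hβ₁
    have hb₁B₁ : b₁ ∉ insert a (β₁ \ {b₁}) := by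
      rintro (rfl | ⟨_, h⟩)
      · exact haβ₁ hb₁
      · exact h rfl
    rcases h₂ with hβ₂ | ⟨β₂, b₂, hβ₂, ⟨hb₂, hb₂F⟩, rfl⟩
    · -- Case 3
      by_cases hxa : x = a
      · have hne : ¬ (B₂ ⊆ M'.closure (β₁ \ {b₁})) := by
          intro h
          have h2 : M'.E ⊆ M'.closure (β₁ \ {b₁}) := by
            rw [← hβ₂.closure_eq]
            exact M'.closure_subset_closure_of_subset_closure h
          exact hβ₁.indep.notMem_closure_diff_of_mem hb₁ (h2 (hβ₁.subset_ground hb₁))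
        obtain ⟨y, hyβ₂, hycl⟩ := not_subset.mp hne
        have hyE : y ∈ M'.E := hβ₂.subset_ground hyβ₂
        have hyB₁ : y ∉ insert a (β₁ \ {b₁}) :=
          hni hyE (fun h => hycl (M'.subset_closure _ (diff_subset.trans hβ₁.subset_ground) h))
        have hBeq : insert a (β₁ \ {b₁}) \ {a} = β₁ \ {b₁} :=
          insert_diff_self_of_notMem (fun h => haβ₁ h.1)
        have hbase : M'.IsBase (insert y (β₁ \ {b₁})) := by
          by_cases hyb₁ : y = b₁
          · subst hyb₁
            rwa [insert_diff_singleton, insert_eq_of_mem hb₁]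
          · have hyβ₁ : y ∉ β₁ := by
              intro h
              exact hycl (M'.subset_closure _ (diff_subset.trans hβ₁.subset_ground) ⟨h, hyb₁⟩)
            have hind : M'.Indep (insert y (β₁ \ {b₁})) := by
              rw [(hβ₁.indep.subset diff_subset).insert_indep_iff_of_notMem
                (fun h => hyβ₁ h.1)]
              exact ⟨hyE, hycl⟩
            exact hβ₁.exchange_isBase_of_indep hyβ₁ hind
        exact ⟨y, ⟨hyβ₂, hyB₁⟩, Or.inl (by rw [hxa, hBeq]; exact hbase)⟩
      · have hxβ₁ : x ∈ β₁ \ {b₁} := by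
          rcases hx.1 with rfl | h
          · exact absurd rfl hxa
          · exact h
        obtain ⟨y, ⟨hyβ₂, hyβ₁⟩, hbase⟩ := hβ₁.exchange hβ₂ ⟨hxβ₁.1, hx.2⟩
        have hyB₁ : y ∉ insert a (β₁ \ {b₁}) :=
          hni (hβ₂.subset_ground hyβ₂) (fun h => hyβ₁ h.1)
        refine ⟨y, ⟨hyβ₂, hyB₁⟩, Or.inr ⟨insert y (β₁ \ {x}), b₁, hbase,
          ⟨mem_insert_of_mem _ ⟨hb₁, fun h => hxβ₁.2 h.symm⟩, hb₁F⟩, ?_⟩⟩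
        exact insert_swap1 hxa (fun h => hyβ₁ (h ▸ hb₁))
    · -- Case 4
      have haβ₂ : a ∉ β₂ := hnm hβ₂
      have hxa : x ≠ a := fun h => hx.2 (h ▸ mem_insert _ _)
      have hxβ₁ : x ∈ β₁ \ {b₁} := by
        rcases hx.1 with rfl | h
        · exact absurd rfl hxa
        · exact h
      by_cases hxβ₂ : x ∈ β₂
      · have hxb₂ : x = b₂ := by
          by_contra h
          exact hx.2 (mem_insert_of_mem _ ⟨hxβ₂, h⟩)
        by_cases hb₁β₂ : b₁ ∈ β₂
        · have hb₁b₂ : b₁ ≠ b₂ := fun h => hxβ₁.2 (hxb₂.trans h.symm)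
          refine ⟨b₁, ⟨mem_insert_of_mem _ ⟨hb₁β₂, hb₁b₂⟩, hb₁B₁⟩,
            Or.inr ⟨β₁, x, hβ₁, ⟨hxβ₁.1, hxb₂ ▸ hb₂F⟩, ?_⟩⟩
          exact insert_swap2 hb₁ hxa (fun h => hxβ₁.2 h.symm)
        · obtain ⟨z, ⟨hzβ₂, hzβ₁⟩, hbase⟩ := hβ₁.exchange hβ₂ ⟨hb₁, hb₁β₂⟩
          have hzb₂ : z ≠ b₂ := fun h => hzβ₁ (h ▸ hxb₂ ▸ hxβ₁.1)
          have hzB₁ : z ∉ insert a (β₁ \ {b₁}) :=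
            hni (hβ₂.subset_ground hzβ₂) (fun h => hzβ₁ h.1)
          refine ⟨z, ⟨mem_insert_of_mem _ ⟨hzβ₂, hzb₂⟩, hzB₁⟩,
            Or.inr ⟨insert z (β₁ \ {b₁}), x, hbase,
              ⟨mem_insert_of_mem _ hxβ₁, hxb₂ ▸ hb₂F⟩, ?_⟩⟩
          have hzx : z ≠ x := fun h => hzβ₁ (h ▸ hxβ₁.1)
          ext t
          simp only [mem_insert_iff, mem_diff, mem_singleton_iff]
          constructor
          · rintro (rfl | ⟨rfl | ⟨h1, h2⟩, h3⟩)
            · exact Or.inr ⟨Or.inl rfl, hzx⟩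
            · exact Or.inl rfl
            · exact Or.inr ⟨Or.inr ⟨h1, h2⟩, h3⟩
          · rintro (rfl | ⟨rfl | ⟨h1, h2⟩, h3⟩)
            · exact Or.inr ⟨Or.inl rfl, fun h => hxa h.symm⟩
            · exact Or.inl rfl
            · exact Or.inr ⟨Or.inr ⟨h1, h2⟩, h3⟩
      · obtain ⟨y, ⟨hyβ₂, hyβ₁⟩, hbase⟩ := hβ₁.exchange hβ₂ ⟨hxβ₁.1, hxβ₂⟩
        by_cases hyb₂ : y = b₂
        · subst hyb₂
          -- y = b₂ ∉ β₁ ; β₄ = insert b₂ (β₁ \ {x}) is a base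
          by_cases hb₁β₂ : b₁ ∈ β₂
          · have hb₁b₂ : b₁ ≠ y := fun h => hyβ₁ (h ▸ hb₁)
            refine ⟨b₁, ⟨mem_insert_of_mem _ ⟨hb₁β₂, hb₁b₂⟩, hb₁B₁⟩,
              Or.inr ⟨insert y (β₁ \ {x}), y, hbase, ⟨mem_insert _ _, hb₂F⟩, ?_⟩⟩
            rw [insert_diff_self_of_notMem (fun h => hyβ₁ h.1)]
            exact insert_swap2 hb₁ hxa (fun h => hxβ₁.2 h.symm)
          · have hb₁β₄ : b₁ ∈ insert y (β₁ \ {x}) \ β₂ :=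
              ⟨mem_insert_of_mem _ ⟨hb₁, fun h => hxβ₁.2 h.symm⟩, hb₁β₂⟩
            obtain ⟨z, ⟨hzβ₂, hzβ₄⟩, hbase₅⟩ := hbase.exchange hβ₂ hb₁β₄
            have hzy : z ≠ y := fun h => hzβ₄ (h ▸ mem_insert _ _)
            have hzβ₁ : z ∉ β₁ := by
              intro h
              have hzx : z ≠ x := fun h' => hxβ₂ (h' ▸ hzβ₂)
              exact hzβ₄ (mem_insert_of_mem _ ⟨h, hzx⟩)
            have hzB₁ : z ∉ insert a (β₁ \ {b₁}) :=
              hni (hβ₂.subset_ground hzβ₂) (fun h => hzβ₁ h.1)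
            refine ⟨z, ⟨mem_insert_of_mem _ ⟨hzβ₂, hzy⟩, hzB₁⟩,
              Or.inr ⟨insert z (insert y (β₁ \ {x}) \ {b₁}), y, hbase₅,
                ⟨mem_insert_of_mem _ ⟨mem_insert _ _, fun h => hyβ₁ (h ▸ hb₁)⟩, hb₂F⟩, ?_⟩⟩
            ext t
            simp only [mem_insert_iff, mem_diff, mem_singleton_iff]
            constructor
            · rintro (rfl | ⟨rfl | ⟨h1, h2⟩, h3⟩)
              · exact Or.inr ⟨Or.inl rfl, hzy⟩
              · exact Or.inl rfl
              · exact Or.inr ⟨Or.inr ⟨Or.inr ⟨h1, h3⟩, h2⟩, fun hh => hyβ₁ (hh ▸ h1)⟩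
            · rintro (rfl | ⟨rfl | ⟨rfl | ⟨h1, h3⟩, h2⟩, h4⟩)
              · exact Or.inr ⟨Or.inl rfl, fun hh => hxa hh.symm⟩
              · exact Or.inl rfl
              · exact absurd rfl h4
              · exact Or.inr ⟨Or.inr ⟨h1, h2⟩, h3⟩
        · have hyB₁ : y ∉ insert a (β₁ \ {b₁}) := by
            rintro (rfl | h)
            · exact ha (hβ₂.subset_ground hyβ₂)
            · exact hyβ₁ h.1
          refine ⟨y, ⟨mem_insert_of_mem _ ⟨hyβ₂, hyb₂⟩, hyB₁⟩,
            Or.inr ⟨insert y (β₁ \ {x}), b₁, hbase,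
              ⟨mem_insert_of_mem _ ⟨hb₁, fun h => hxβ₁.2 h.symm⟩, hb₁F⟩, ?_⟩⟩
          exact insert_swap1 hxa (fun h => hyβ₁ (h ▸ hb₁))

lemma peb_maximality (ha : a ∉ M'.E) (hF : M'.IsFlat F) (X : Set α)
    (hX : X ⊆ insert a M'.E) :
    Matroid.ExistsMaximalSubsetProperty
      (fun I => ∃ B, PrincipalExtBase M' F a B ∧ I ⊆ B) X := by
  intro I hI hIX
  by_cases haX : a ∈ X
  · -- a ∈ X
    have hX'E : X \ {a} ⊆ M'.E := by
      intro t ⟨ht, hta⟩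
      rcases hX ht with rfl | h
      · exact absurd rfl hta
      · exact h
    have hIa : M'.Indep (I \ {a}) := by
      rcases (peb_indep_iff ha hF).mp hI with ⟨haI, h⟩ | ⟨_, h, _⟩
      · exact h.subset diff_subset
      · exact h
    obtain ⟨J, hJ, hIJ⟩ := hIa.subset_isBasis_of_subset (diff_subset_diff_left hIX) hX'E
    have haJ : a ∉ J := fun h => ha (hX'E (hJ.subset h))
    by_cases hFJ : F ⊆ M'.closure J
    · by_cases haI : a ∈ I
      · -- hard case: a ∈ I and F ⊆ cl J
        obtain ⟨f, hfF, hf⟩ : ∃ f ∈ F, f ∉ M'.closure (I \ {a}) := by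
          rcases (peb_indep_iff ha hF).mp hI with ⟨h, _⟩ | ⟨_, _, h⟩
          · exact absurd haI h
          · exact h
        have hfE : f ∈ M'.E := hF.subset_ground hfF
        have hfI : f ∉ I \ {a} := fun h => hf (M'.subset_closure _ hIa.subset_ground h)
        have hins : M'.Indep (insert f (I \ {a})) := by
          rw [hIa.insert_indep_iff_of_notMem hfI]
          exact ⟨hfE, hf⟩
        have hYE : insert f (X \ {a}) ⊆ M'.E := insert_subset hfE hX'E
        obtain ⟨J₁, hJ₁, hsubJ₁⟩ := hins.subset_isBasis_of_subset
          (insert_subset_insert (diff_subset_diff_left hIX)) hYE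
        have hfJ₁ : f ∈ J₁ := hsubJ₁ (mem_insert _ _)
        have hJ₁eq : insert f (J₁ \ {f}) = J₁ := by
          rw [insert_diff_singleton, insert_eq_of_mem hfJ₁]
        have hKX' : J₁ \ {f} ⊆ X \ {a} := by
          intro t ⟨h1, h2⟩
          rcases hJ₁.subset h1 with rfl | h
          · exact absurd rfl h2
          · exact h
        have hKind : M'.Indep (J₁ \ {f}) := hJ₁.indep.subset diff_subset
        have hfK : f ∉ M'.closure (J₁ \ {f}) :=
          hJ₁.indep.notMem_closure_diff_of_mem hfJ₁
        have haK : a ∉ J₁ \ {f} := fun h => ha (hX'E (hKX' h))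
        have hIK : I \ {a} ⊆ J₁ \ {f} := fun t ht =>
          ⟨hsubJ₁ (mem_insert_of_mem _ ht), fun h => hfI (h ▸ ht)⟩
        refine ⟨insert a (J₁ \ {f}), ?_, ⟨⟨?_, ?_⟩, ?_⟩⟩
        · intro t ht
          by_cases hta : t = a
          · exact hta ▸ mem_insert _ _
          · exact mem_insert_of_mem _ (hIK ⟨ht, hta⟩)
        · refine (peb_indep_iff ha hF).mpr (Or.inr ⟨mem_insert _ _, ?_, f, hfF, ?_⟩) <;>
            rw [insert_diff_self_of_notMem haK]
          · exact hKind
          · exact hfK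
        · exact insert_subset haX (hKX'.trans diff_subset)
        · intro K' hK' hCK'
          have haK' : a ∈ K' := hCK' (mem_insert _ _)
          obtain ⟨hLind, g, hgF, hgcl⟩ :
              M'.Indep (K' \ {a}) ∧ ∃ g ∈ F, g ∉ M'.closure (K' \ {a}) := by
            rcases (peb_indep_iff ha hF).mp hK'.1 with ⟨h, _⟩ | ⟨_, h1, h2⟩
            · exact absurd haK' h
            · exact ⟨h1, h2⟩
          have hKL : J₁ \ {f} ⊆ K' \ {a} := fun t ht =>
            ⟨hCK' (mem_insert_of_mem _ ht), fun h => haK (h ▸ ht)⟩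
          have hLX' : K' \ {a} ⊆ X \ {a} := diff_subset_diff_left hK'.2
          by_cases hfL : f ∈ M'.closure (K' \ {a})
          · exfalso
            have h1 : J₁ ⊆ M'.closure (K' \ {a}) := by
              rw [← hJ₁eq]
              exact insert_subset hfL
                (hKL.trans (M'.subset_closure _ hLind.subset_ground))
            have h2 : M'.closure J₁ ⊆ M'.closure (K' \ {a}) :=
              M'.closure_subset_closure_of_subset_closure h1
            have h3 : J ⊆ M'.closure (K' \ {a}) := fun t ht =>
              h2 (hJ₁.subset_closure (mem_insert_of_mem _ (hJ.subset ht)))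
            have h4 : F ⊆ M'.closure (K' \ {a}) :=
              hFJ.trans (M'.closure_subset_closure_of_subset_closure h3)
            exact hgcl (h4 hgF)
          · have hfL' : f ∉ K' \ {a} := fun h =>
              hfL (M'.subset_closure _ hLind.subset_ground h)
            have hind2 : M'.Indep (insert f (K' \ {a})) := by
              rw [hLind.insert_indep_iff_of_notMem hfL']
              exact ⟨hfE, hfL⟩
            have h5 : insert f (K' \ {a}) ⊆ J₁ :=
              hJ₁.1.2 ⟨hind2, insert_subset_insert hLX'⟩
                (by rw [← hJ₁eq]; exact insert_subset_insert hKL)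
            intro t ht
            by_cases hta : t = a
            · exact hta ▸ mem_insert _ _
            · refine mem_insert_of_mem _ ⟨h5 (mem_insert_of_mem _ ⟨ht, hta⟩), ?_⟩
              exact fun h => hfL' (h ▸ ⟨ht, hta⟩)
      · -- a ∉ I and F ⊆ cl J : candidate J
        refine ⟨J, ?_, ⟨⟨?_, hJ.subset.trans diff_subset⟩, ?_⟩⟩
        · exact (diff_singleton_eq_self haI ▸ hIJ)
        · obtain ⟨β, hβ, hJβ⟩ := hJ.indep.exists_isBase_superset
          exact ⟨β, Or.inl hβ, hJβ⟩
        · intro K hK hJK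
          by_cases haK : a ∈ K
          · exfalso
            obtain ⟨hLind, g, hgF, hgcl⟩ :
                M'.Indep (K \ {a}) ∧ ∃ g ∈ F, g ∉ M'.closure (K \ {a}) := by
              rcases (peb_indep_iff ha hF).mp hK.1 with ⟨h, _⟩ | ⟨_, h1, h2⟩
              · exact absurd haK h
              · exact ⟨h1, h2⟩
            have hJL : J ⊆ K \ {a} := fun t ht =>
              ⟨hJK ht, fun h => haJ (h ▸ ht)⟩
            have hLJ : K \ {a} ⊆ J :=
              hJ.1.2 ⟨hLind, diff_subset_diff_left hK.2⟩ hJL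
            exact hgcl ((hLJ.antisymm hJL ▸ hFJ) hgF)
          · have hKind : M'.Indep K := by
              rcases (peb_indep_iff ha hF).mp hK.1 with ⟨_, h⟩ | ⟨h, _⟩
              · exact h
              · exact absurd h haK
            exact hJ.1.2 ⟨hKind, subset_diff_singleton hK.2 haK⟩ hJK
    · -- ¬ F ⊆ cl J : candidate insert a J
      obtain ⟨f', hf'F, hf'⟩ := not_subset.mp hFJ
      refine ⟨insert a J, ?_, ⟨⟨?_, insert_subset haX (hJ.subset.trans diff_subset)⟩, ?_⟩⟩
      · intro t ht
        by_cases hta : t = a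
        · exact hta ▸ mem_insert _ _
        · exact mem_insert_of_mem _ (hIJ ⟨ht, hta⟩)
      · refine (peb_indep_iff ha hF).mpr (Or.inr ⟨mem_insert _ _, ?_, f', hf'F, ?_⟩) <;>
          rw [insert_diff_self_of_notMem haJ]
        · exact hJ.indep
        · exact hf'
      · intro K' hK' hCK'
        have haK' : a ∈ K' := hCK' (mem_insert _ _)
        have hLind : M'.Indep (K' \ {a}) := by
          rcases (peb_indep_iff ha hF).mp hK'.1 with ⟨h, _⟩ | ⟨_, h, _⟩
          · exact absurd haK' h
          · exact h
        have hJL : J ⊆ K' \ {a} := fun t ht =>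
          ⟨hCK' (mem_insert_of_mem _ ht), fun h => haJ (h ▸ ht)⟩
        have hLJ : K' \ {a} ⊆ J :=
          hJ.1.2 ⟨hLind, diff_subset_diff_left hK'.2⟩ hJL
        intro t ht
        by_cases hta : t = a
        · exact hta ▸ mem_insert _ _
        · exact mem_insert_of_mem _ (hLJ ⟨ht, hta⟩)
  · -- a ∉ X
    have hXE : X ⊆ M'.E := by
      intro t ht
      rcases hX ht with rfl | h
      · exact absurd ht haX
      · exact h
    have haI : a ∉ I := fun h => haX (hIX h)
    have hI' : M'.Indep I := by
      rcases (peb_indep_iff ha hF).mp hI with ⟨_, h⟩ | ⟨h, _⟩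
      · exact h
      · exact absurd h haI
    obtain ⟨J, hJ, hIJ⟩ := hI'.subset_isBasis_of_subset hIX hXE
    refine ⟨J, hIJ, ⟨⟨?_, hJ.subset⟩, ?_⟩⟩
    · obtain ⟨β, hβ, hJβ⟩ := hJ.indep.exists_isBase_superset
      exact ⟨β, Or.inl hβ, hJβ⟩
    · intro K hK hJK
      have haK : a ∉ K := fun h => haX (hK.2 h)
      have hK' : M'.Indep K := by
        rcases (peb_indep_iff ha hF).mp hK.1 with ⟨_, h⟩ | ⟨h, _⟩
        · exact h
        · exact absurd h haK
      exact hJ.1.2 ⟨hK', hK.2⟩ hJK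

end Aux

/-- Let `M'` be a matroid on `E'`, `F` a flat of `M'`, and
`a ∉ E'`.  Then the collection `PrincipalExtBase M' F a` satisfies the basis exchange
axiom; consequently it is the set of bases of a matroid `M = M' +_F a` on
`E' ∪ {a}` (the principal extension), and `rank M = rank M'` (every base of `M` has
the same cardinality as every base of `M'`). -/
theorem statement14 {α : Type*} (M' : Matroid α) (a : α) (ha : a ∉ M'.E)
    (F : Set α) (hF : M'.IsFlat F) :
    (∀ B₁ B₂ : Set α, PrincipalExtBase M' F a B₁ → PrincipalExtBase M' F a B₂ →
      ∀ x ∈ B₁ \ B₂, ∃ y ∈ B₂ \ B₁,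
        PrincipalExtBase M' F a (insert y (B₁ \ {x}))) ∧
    (∃ M : Matroid α, M.E = insert a M'.E ∧
      (∀ B : Set α, M.IsBase B ↔ PrincipalExtBase M' F a B) ∧
      (∀ B B' : Set α, M.IsBase B → M'.IsBase B' → B.ncard = B'.ncard)) := by
  have hexch := peb_exchange ha hF
  refine ⟨hexch, ?_⟩
  obtain ⟨β₀, hβ₀⟩ := M'.exists_isBase
  refine ⟨Matroid.ofBase (insert a M'.E) (PrincipalExtBase M' F a)
      ⟨β₀, Or.inl hβ₀⟩ hexch (fun X hX => peb_maximality ha hF X hX)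
      (fun B hB => peb_subset_ground ha hB), rfl, fun B => Iff.rfl, ?_⟩
  rintro B B' hB hB'
  rcases (hB : PrincipalExtBase M' F a B) with hb | ⟨β, b, hβ, ⟨hbβ, _⟩, rfl⟩
  · exact hb.ncard_eq_ncard_of_isBase hB'
  · have haβ : a ∉ β \ {b} := fun h => ha (hβ.subset_ground h.1)
    have h1 : (insert a (β \ {b})).encard = β.encard := by
      rw [encard_insert_of_notMem haβ, encard_diff_singleton_add_one hbβ]
    rw [ncard_def, h1, hβ.encard_eq_encard_of_isBase hB', ← ncard_def]
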